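/- Let Φ be a homogeneous Poisson point process on (0,∞) with intensity λ and i.i.d. Exponential(μ) marks. Fix x < 0 and h > 0 and define tan Θᴿ_{x,h} = sup_{x_i ∈ Φ} (h_i − h)₊/(x_i − x). Then P[tan Θᴿ_{x,h} ≤ t] = exp(−(ρ/t)·e^{−μh}·e^{μtx}) for t > 0, with ρ = λ/μ. -/

import Mathlib

open MeasureTheory ProbabilityTheory Real Set

open Filter
open scoped ENNReal Topology


namespace RISaux

lemma gammaPDF_one_eq (r : ℝ) : gammaPDF 1 r = exponentialPDF r := rfl

lemma expMeasure_Iic {r : ℝ} (hr : 0 < r) (s : ℝ) :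
    expMeasure r (Iic s) = ENNReal.ofReal (if 0 ≤ s then 1 - Real.exp (-(r * s)) else 0) := by
  rw [expMeasure, gammaMeasure, withDensity_apply _ measurableSet_Iic, gammaPDF_one_eq,
    lintegral_exponentialPDF_eq_antiDeriv hr]

lemma map_eq_expMeasure {Ω : Type*} [MeasurableSpace Ω] (P : Measure Ω) [IsProbabilityMeasure P]
    {f : Ω → ℝ} (hf : Measurable f) {r : ℝ} (hr : 0 < r)
    (hd : ∀ s : ℝ, 0 ≤ s → P {ω | f ω ≤ s} = ENNReal.ofReal (1 - Real.exp (-(r * s)))) :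
    P.map f = expMeasure r := by
  have : IsProbabilityMeasure (expMeasure r) := isProbabilityMeasure_expMeasure hr
  refine Measure.ext_of_Iic _ _ (fun s => ?_)
  rw [Measure.map_apply hf measurableSet_Iic, expMeasure_Iic hr]
  by_cases hs : 0 ≤ s
  · rw [if_pos hs, ← hd s hs]; rfl
  · rw [if_neg hs, ENNReal.ofReal_zero]
    have h0 : f ⁻¹' Iic s ⊆ {ω | f ω ≤ 0} := fun ω hω => le_trans hω (le_of_not_ge hs)
    have := hd 0 le_rfl
    simp only [mul_zero, neg_zero, Real.exp_zero, sub_self, ENNReal.ofReal_zero] at this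
    exact measure_mono_null h0 this

lemma measurable_gammaPDF (a r : ℝ) : Measurable (gammaPDF a r) :=
  (measurable_gammaPDFReal a r).ennreal_ofReal

lemma lintegral_expMeasure {r : ℝ} (f : ℝ → ℝ≥0∞) (hf : Measurable f) :
    ∫⁻ s, f s ∂(expMeasure r)
      = ∫⁻ s in Ioi (0:ℝ), ENNReal.ofReal (r * Real.exp (-(r * s))) * f s := by
  rw [expMeasure, gammaMeasure, lintegral_withDensity_eq_lintegral_mul _ (measurable_gammaPDF 1 r) hf]
  rw [← lintegral_add_compl (fun a => (gammaPDF 1 r * f) a) (measurableSet_Ioi (a := (0:ℝ)))]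
  have h2 : ∫⁻ s in (Ioi (0:ℝ))ᶜ, (gammaPDF 1 r * f) s = 0 := by
    rw [compl_Ioi]
    have hae : Iic (0:ℝ) =ᵐ[volume] Iio (0:ℝ) := by
      refine Filter.EventuallyEq.symm (ae_eq_set.2 ⟨?_, ?_⟩)
      · simp [Set.diff_eq_empty.2 Iio_subset_Iic_self]
      · have : Iic (0:ℝ) \ Iio 0 ⊆ {0} := by
          intro y hy; simp only [mem_diff, mem_Iic, mem_Iio, not_lt, mem_singleton_iff] at *
          exact le_antisymm hy.1 hy.2
        exact measure_mono_null this (measure_singleton 0)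
    rw [Measure.restrict_congr_set hae]
    rw [setLIntegral_congr_fun measurableSet_Iio (fun y (hy : y < 0) => ?_),
      lintegral_zero]
    show gammaPDF 1 r y * f y = 0
    rw [gammaPDF_one_eq, exponentialPDF_of_neg hy, zero_mul]
  rw [h2, add_zero]
  refine setLIntegral_congr_fun measurableSet_Ioi (fun y (hy : 0 < y) => ?_)
  show gammaPDF 1 r y * f y = _
  rw [gammaPDF_one_eq, exponentialPDF_of_nonneg hy.le]



lemma hasDerivAt_aux (lam mu t k b : ℝ) (hk : k * (mu * t) = lam) (x : ℝ) :
    HasDerivAt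
      (fun s => -(Real.exp (-(lam * s)) * Real.exp (-(k * Real.exp (-(mu * (b + t * s)))))))
      (lam * Real.exp (-(lam * x)) * ((1 - Real.exp (-(mu * (b + t * x)))) *
        Real.exp (-(k * Real.exp (-(mu * (b + t * x))))))) x := by
  have h1 : HasDerivAt (fun s : ℝ => -(lam * s)) (-lam) x := by
    simpa using ((hasDerivAt_id x).const_mul lam).fun_neg
  have h2 := h1.exp
  have h3 : HasDerivAt (fun s : ℝ => -(mu * (b + t * s))) (-(mu * t)) x := by
    simpa using ((((hasDerivAt_id x).const_mul t).const_add b).const_mul mu).fun_neg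
  have h4 := ((h3.exp.const_mul k).fun_neg).exp
  have h5 := (h2.fun_mul h4).fun_neg
  refine h5.congr_deriv (Eq.symm ?_)
  have e1 := Real.exp (-(lam * x))
  linear_combination (Real.exp (-(lam * x)) * Real.exp (-(mu * (b + t * x))) *
    Real.exp (-(k * Real.exp (-(mu * (b + t * x)))))) * hk

lemma tendsto_F (lam k mu t b : ℝ) (hlam : 0 < lam) (hknn : 0 ≤ k) :
    Tendsto (fun s => -(Real.exp (-(lam * s)) * Real.exp (-(k * Real.exp (-(mu * (b + t * s)))))))
      atTop (𝓝 0) := by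
  have hexp : Tendsto (fun s : ℝ => Real.exp (-(lam * s))) atTop (𝓝 0) := by
    have hmul : Tendsto (fun s : ℝ => lam * s) atTop atTop :=
      Tendsto.const_mul_atTop hlam tendsto_id
    have := Real.tendsto_exp_neg_atTop_nhds_zero.comp hmul
    exact this
  have hlow : Tendsto (fun s : ℝ => -Real.exp (-(lam * s))) atTop (𝓝 0) := by
    simpa using hexp.neg
  refine tendsto_of_tendsto_of_tendsto_of_le_of_le hlow hexp (fun s => ?_) (fun s => ?_)
  · have h1 : Real.exp (-(k * Real.exp (-(mu * (b + t * s))))) ≤ 1 := by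
      rw [Real.exp_le_one_iff]
      have : 0 ≤ k * Real.exp (-(mu * (b + t * s))) := mul_nonneg hknn (Real.exp_pos _).le
      linarith
    nlinarith [Real.exp_pos (-(lam * s)), Real.exp_pos (-(k * Real.exp (-(mu * (b + t * s)))))]
  · nlinarith [Real.exp_pos (-(lam * s)), Real.exp_pos (-(k * Real.exp (-(mu * (b + t * s)))))]

lemma integrable_dom (lam : ℝ) (hlam : 0 < lam) :
    Integrable (fun s : ℝ => lam * Real.exp (-(lam * s))) (volume.restrict (Ioi (0:ℝ))) := by
  have := (exp_neg_integrableOn_Ioi 0 hlam).const_mul lam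
  simpa [neg_mul] using this

lemma integral_fixed {lam mu t b : ℝ} (hlam : 0 < lam) (hmu : 0 < mu) (ht : 0 < t) (hb : 0 ≤ b) :
    ∫⁻ s in Ioi (0:ℝ), ENNReal.ofReal (lam * Real.exp (-(lam * s))) *
        (ENNReal.ofReal (1 - Real.exp (-(mu * (b + t * s)))) *
          ENNReal.ofReal (Real.exp (-(lam / (mu * t) * Real.exp (-(mu * (b + t * s)))))))
      = ENNReal.ofReal (Real.exp (-(lam / (mu * t) * Real.exp (-(mu * b))))) := by
  set k := lam / (mu * t) with hk'
  have hmt : 0 < mu * t := mul_pos hmu ht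
  have hk : k * (mu * t) = lam := div_mul_cancel₀ _ (ne_of_gt hmt)
  have hkpos : 0 < k := div_pos hlam hmt
  set φ : ℝ → ℝ := fun s => lam * Real.exp (-(lam * s)) * ((1 - Real.exp (-(mu * (b + t * s)))) *
    Real.exp (-(k * Real.exp (-(mu * (b + t * s)))))) with hφ
  have hbts : ∀ s : ℝ, 0 ≤ s → 0 ≤ 1 - Real.exp (-(mu * (b + t * s))) := by
    intro s hs
    have : -(mu * (b + t * s)) ≤ 0 := by nlinarith
    have := Real.exp_le_one_iff.2 this
    linarith
  have hnn : ∀ s ∈ Ioi (0:ℝ), 0 ≤ φ s := by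
    intro s hs
    have := hbts s (le_of_lt hs)
    positivity
  have hcont : Continuous φ := by fun_prop
  have step1 : ∫⁻ s in Ioi (0:ℝ), ENNReal.ofReal (lam * Real.exp (-(lam * s))) *
        (ENNReal.ofReal (1 - Real.exp (-(mu * (b + t * s)))) *
          ENNReal.ofReal (Real.exp (-(k * Real.exp (-(mu * (b + t * s)))))))
      = ∫⁻ s in Ioi (0:ℝ), ENNReal.ofReal (φ s) := by
    refine setLIntegral_congr_fun measurableSet_Ioi (fun s hs => ?_)
    rw [← ENNReal.ofReal_mul (hbts s (le_of_lt hs)),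
      ← ENNReal.ofReal_mul (le_of_lt (mul_pos hlam (Real.exp_pos _)))]
  rw [step1]
  have hint : Integrable φ (volume.restrict (Ioi (0:ℝ))) := by
    refine (integrable_dom lam hlam).mono' hcont.aestronglyMeasurable ?_
    rw [ae_restrict_iff' measurableSet_Ioi]
    refine ae_of_all _ (fun s hs => ?_)
    rw [Real.norm_eq_abs, abs_of_nonneg (hnn s hs)]
    have h1 := hbts s (le_of_lt hs)
    have h2 : Real.exp (-(mu * (b + t * s))) ≤ 1 := by
      rw [Real.exp_le_one_iff]
      nlinarith [le_of_lt (mem_Ioi.mp hs)]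
    have h3 : Real.exp (-(k * Real.exp (-(mu * (b + t * s))))) ≤ 1 := by
      rw [Real.exp_le_one_iff]
      nlinarith [Real.exp_pos (-(mu * (b + t * s)))]
    have h4 : (1 - Real.exp (-(mu * (b + t * s)))) *
        Real.exp (-(k * Real.exp (-(mu * (b + t * s))))) ≤ 1 :=
      mul_le_one₀ (by linarith [Real.exp_pos (-(mu * (b + t * s)))]) (Real.exp_pos _).le h3
    calc lam * Real.exp (-(lam * s)) * ((1 - Real.exp (-(mu * (b + t * s)))) *
          Real.exp (-(k * Real.exp (-(mu * (b + t * s)))))) ≤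
        lam * Real.exp (-(lam * s)) * 1 :=
          mul_le_mul_of_nonneg_left h4 (by positivity)
      _ = lam * Real.exp (-(lam * s)) := mul_one _
  rw [← ofReal_integral_eq_lintegral_ofReal hint
    ((ae_restrict_iff' measurableSet_Ioi).2 (ae_of_all _ hnn))]
  congr 1
  have := integral_Ioi_of_hasDerivAt_of_tendsto' (f' := φ) (a := 0)
    (fun x _ => hasDerivAt_aux lam mu t k b hk x) hint (tendsto_F lam k mu t b hlam hkpos.le)
  rw [this]
  simp [Real.exp_zero]

lemma integral_geom {lam c : ℝ} (hlam : 0 < lam) (hc : 0 < c) :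
    ∫⁻ s in Ioi (0:ℝ), ENNReal.ofReal (lam * Real.exp (-(lam * s))) *
        ENNReal.ofReal (Real.exp (-(c * s)))
      = ENNReal.ofReal (lam / (lam + c)) := by
  have hlc : 0 < lam + c := by linarith
  set φ : ℝ → ℝ := fun s => lam * Real.exp (-((lam + c) * s)) with hφ
  have step1 : ∫⁻ s in Ioi (0:ℝ), ENNReal.ofReal (lam * Real.exp (-(lam * s))) *
        ENNReal.ofReal (Real.exp (-(c * s)))
      = ∫⁻ s in Ioi (0:ℝ), ENNReal.ofReal (φ s) := by
    refine setLIntegral_congr_fun measurableSet_Ioi (fun s hs => ?_)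
    rw [← ENNReal.ofReal_mul (by positivity)]
    congr 1
    rw [hφ, mul_assoc, ← Real.exp_add]
    ring_nf
  rw [step1]
  have hnn : ∀ s ∈ Ioi (0:ℝ), 0 ≤ φ s := fun s _ => by positivity
  have hint : Integrable φ (volume.restrict (Ioi (0:ℝ))) := by
    have h := (exp_neg_integrableOn_Ioi 0 hlc).const_mul lam
    rw [hφ]
    simpa only [neg_mul] using h
  rw [← ofReal_integral_eq_lintegral_ofReal hint
    ((ae_restrict_iff' measurableSet_Ioi).2 (ae_of_all _ hnn))]
  congr 1
  have hderiv : ∀ x ∈ Ici (0:ℝ), HasDerivAt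
      (fun s => -(lam / (lam + c) * Real.exp (-((lam + c) * s)))) (φ x) x := by
    intro x _
    have h1 : HasDerivAt (fun s : ℝ => -((lam + c) * s)) (-(lam + c)) x := by
      simpa using ((hasDerivAt_id x).const_mul (lam + c)).fun_neg
    have h2 := (h1.exp.const_mul (lam / (lam + c))).fun_neg
    refine h2.congr_deriv (Eq.symm ?_)
    field_simp [hφ]
    ring
  have htend : Tendsto (fun s => -(lam / (lam + c) * Real.exp (-((lam + c) * s))))
      atTop (𝓝 0) := by
    have hexp : Tendsto (fun s : ℝ => Real.exp (-((lam + c) * s))) atTop (𝓝 0) := by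
      have hmul : Tendsto (fun s : ℝ => (lam + c) * s) atTop atTop :=
        Tendsto.const_mul_atTop hlc tendsto_id
      have := Real.tendsto_exp_neg_atTop_nhds_zero.comp hmul
      exact this
    have := (hexp.const_mul (lam / (lam + c))).neg
    simpa using this
  have := integral_Ioi_of_hasDerivAt_of_tendsto' hderiv hint htend
  rw [this]
  simp [Real.exp_zero]



noncomputable def A (lam mu c t : ℝ) : ℕ → ℝ → ℝ≥0∞
  | 0, _ => 1
  | n+1, a => ∫⁻ s, ENNReal.ofReal (1 - Real.exp (-(mu * (c + t * (a + s))))) *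
      A lam mu c t n (a + s) ∂(expMeasure lam)

lemma A_zero (lam mu c t a : ℝ) : A lam mu c t 0 a = 1 := rfl

lemma A_succ (lam mu c t : ℝ) (n : ℕ) (a : ℝ) :
    A lam mu c t (n+1) a = ∫⁻ s, ENNReal.ofReal (1 - Real.exp (-(mu * (c + t * (a + s))))) *
      A lam mu c t n (a + s) ∂(expMeasure lam) := rfl

lemma measurable_A {lam : ℝ} (hlam : 0 < lam) (mu c t : ℝ) (n : ℕ) : Measurable (A lam mu c t n) := by
  haveI : IsProbabilityMeasure (expMeasure lam) := isProbabilityMeasure_expMeasure hlam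
  induction n with
  | zero => exact measurable_const
  | succ n ih =>
    have hm : Measurable (fun p : ℝ × ℝ =>
        ENNReal.ofReal (1 - Real.exp (-(mu * (c + t * (p.1 + p.2))))) *
          A lam mu c t n (p.1 + p.2)) :=
      Measurable.mul (Measurable.ennreal_ofReal (by fun_prop))
        (ih.comp (measurable_fst.add measurable_snd))
    exact hm.lintegral_prod_right'

lemma measurable_integrand {lam : ℝ} (hlam : 0 < lam) (mu c t : ℝ) (n : ℕ) (a : ℝ) :
    Measurable (fun s => ENNReal.ofReal (1 - Real.exp (-(mu * (c + t * (a + s))))) *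
      A lam mu c t n (a + s)) :=
  (Measurable.ennreal_ofReal (by fun_prop)).mul
    ((measurable_A hlam mu c t n).comp (measurable_const.add measurable_id))

variable {lam mu c t : ℝ}

lemma A_ge (hlam : 0 < lam) (hmu : 0 < mu) (ht : 0 < t) (hc : 0 < c) (n : ℕ) :
    ∀ a : ℝ, 0 ≤ a →
      ENNReal.ofReal (Real.exp (-(lam / (mu * t) * Real.exp (-(mu * (c + t * a))))))
        ≤ A lam mu c t n a := by
  induction n with
  | zero =>
    intro a _
    rw [A_zero]
    refine ENNReal.ofReal_le_one.2 (Real.exp_le_one_iff.2 ?_)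
    have : 0 ≤ lam / (mu * t) * Real.exp (-(mu * (c + t * a))) := by positivity
    linarith
  | succ n ih =>
    intro a ha
    rw [A_succ, lintegral_expMeasure _ (measurable_integrand hlam mu c t n a)]
    have key := integral_fixed (b := c + t * a) hlam hmu ht (by positivity)
    rw [← key]
    refine setLIntegral_mono' measurableSet_Ioi (fun s hs => ?_)
    have hcongr : c + t * a + t * s = c + t * (a + s) := by ring
    rw [hcongr]
    exact mul_le_mul_right (mul_le_mul_right (ih (a + s)
      (add_nonneg ha (le_of_lt hs))) _) _

lemma A_le (hlam : 0 < lam) (hmu : 0 < mu) (ht : 0 < t) (hc : 0 < c) (n : ℕ) :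
    ∀ a : ℝ, 0 ≤ a →
      A lam mu c t n a
        ≤ ENNReal.ofReal (Real.exp (-(lam / (mu * t) * Real.exp (-(mu * (c + t * a))))))
          + ENNReal.ofReal (lam / (mu * t) * Real.exp (-(mu * (c + t * a))))
            * (ENNReal.ofReal (lam / (lam + mu * t)))^n := by
  induction n with
  | zero =>
    intro a ha
    rw [A_zero, pow_zero, mul_one]
    have h1 : (1:ℝ) ≤ Real.exp (-(lam / (mu * t) * Real.exp (-(mu * (c + t * a)))))
        + lam / (mu * t) * Real.exp (-(mu * (c + t * a))) := by
      have := Real.add_one_le_exp (-(lam / (mu * t) * Real.exp (-(mu * (c + t * a)))))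
      linarith
    calc (1:ℝ≥0∞) = ENNReal.ofReal 1 := by simp
      _ ≤ ENNReal.ofReal (Real.exp (-(lam / (mu * t) * Real.exp (-(mu * (c + t * a)))))
            + lam / (mu * t) * Real.exp (-(mu * (c + t * a)))) :=
        ENNReal.ofReal_le_ofReal h1
      _ = _ := ENNReal.ofReal_add (Real.exp_pos _).le (by positivity)
  | succ n ih =>
    intro a ha
    have hmt : 0 < mu * t := mul_pos hmu ht
    set k : ℝ := lam / (mu * t) with hkdef
    set rE : ℝ≥0∞ := ENNReal.ofReal (lam / (lam + mu * t)) with hrE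
    rw [A_succ, lintegral_expMeasure _ (measurable_integrand hlam mu c t n a)]
    set G1 : ℝ → ℝ≥0∞ := fun s => ENNReal.ofReal (lam * Real.exp (-(lam * s))) *
      (ENNReal.ofReal (1 - Real.exp (-(mu * (c + t * (a + s))))) *
        ENNReal.ofReal (Real.exp (-(k * Real.exp (-(mu * (c + t * (a + s)))))))) with hG1
    set G2 : ℝ → ℝ≥0∞ := fun s => ENNReal.ofReal (lam * Real.exp (-(lam * s))) *
      (ENNReal.ofReal (k * Real.exp (-(mu * (c + t * (a + s))))) * rE^n) with hG2
    have step1 : ∫⁻ s in Ioi (0:ℝ), ENNReal.ofReal (lam * Real.exp (-(lam * s))) *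
          (ENNReal.ofReal (1 - Real.exp (-(mu * (c + t * (a + s))))) *
            A lam mu c t n (a + s))
        ≤ ∫⁻ s in Ioi (0:ℝ), (G1 s + G2 s) := by
      refine setLIntegral_mono' measurableSet_Ioi (fun s hs => ?_)
      have hihs := ih (a + s) (add_nonneg ha (le_of_lt hs))
      calc ENNReal.ofReal (lam * Real.exp (-(lam * s))) *
            (ENNReal.ofReal (1 - Real.exp (-(mu * (c + t * (a + s))))) *
              A lam mu c t n (a + s))
          ≤ ENNReal.ofReal (lam * Real.exp (-(lam * s))) *
            (ENNReal.ofReal (1 - Real.exp (-(mu * (c + t * (a + s))))) *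
              (ENNReal.ofReal (Real.exp (-(k * Real.exp (-(mu * (c + t * (a + s)))))))
                + ENNReal.ofReal (k * Real.exp (-(mu * (c + t * (a + s))))) * rE^n)) :=
            mul_le_mul_right (mul_le_mul_right hihs _) _
        _ ≤ G1 s + G2 s := by
            rw [hG1, hG2, mul_add, mul_add]
            refine add_le_add le_rfl ?_
            refine mul_le_mul_right ?_ _
            calc ENNReal.ofReal (1 - Real.exp (-(mu * (c + t * (a + s))))) *
                  (ENNReal.ofReal (k * Real.exp (-(mu * (c + t * (a + s))))) * rE^n)
                ≤ 1 * (ENNReal.ofReal (k * Real.exp (-(mu * (c + t * (a + s))))) * rE^n) := by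
                  refine mul_le_mul' (ENNReal.ofReal_le_one.2 ?_) le_rfl
                  have := Real.exp_pos (-(mu * (c + t * (a + s))))
                  linarith
              _ = _ := one_mul _
    have hG1int : ∫⁻ s in Ioi (0:ℝ), G1 s
        = ENNReal.ofReal (Real.exp (-(k * Real.exp (-(mu * (c + t * a)))))) := by
      have key := integral_fixed (b := c + t * a) hlam hmu ht (by positivity)
      rw [← key]
      refine setLIntegral_congr_fun measurableSet_Ioi (fun s _ => ?_)
      have hcongr : c + t * (a + s) = c + t * a + t * s := by ring
      simp only [hG1]
      rw [hcongr]
    have hG2int : ∫⁻ s in Ioi (0:ℝ), G2 s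
        = ENNReal.ofReal (k * Real.exp (-(mu * (c + t * a)))) * rE^(n+1) := by
      have hsplit : ∀ s : ℝ, ENNReal.ofReal (k * Real.exp (-(mu * (c + t * (a + s)))))
          = ENNReal.ofReal (k * Real.exp (-(mu * (c + t * a)))) *
            ENNReal.ofReal (Real.exp (-(mu * t * s))) := by
        intro s
        rw [← ENNReal.ofReal_mul (by positivity)]
        congr 1
        have h9 : (-(mu * (c + t * a))) + (-(mu * t * s)) = -(mu * (c + t * (a + s))) := by ring
        rw [mul_assoc, ← Real.exp_add, h9]
      have hfun : ∀ s : ℝ, G2 s = ENNReal.ofReal (k * Real.exp (-(mu * (c + t * a)))) * rE^n *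
          (ENNReal.ofReal (lam * Real.exp (-(lam * s))) *
            ENNReal.ofReal (Real.exp (-(mu * t * s)))) := by
        intro s
        simp only [hG2]
        rw [hsplit s]
        ring
      simp_rw [hfun]
      rw [lintegral_const_mul _ ((Measurable.ennreal_ofReal (by fun_prop)).fun_mul
        (Measurable.ennreal_ofReal (by fun_prop)))]
      rw [integral_geom hlam hmt]
      rw [pow_succ]
      ring
    calc ∫⁻ s in Ioi (0:ℝ), ENNReal.ofReal (lam * Real.exp (-(lam * s))) *
          (ENNReal.ofReal (1 - Real.exp (-(mu * (c + t * (a + s))))) * A lam mu c t n (a + s))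
        ≤ ∫⁻ s in Ioi (0:ℝ), (G1 s + G2 s) := step1
      _ = (∫⁻ s in Ioi (0:ℝ), G1 s) + ∫⁻ s in Ioi (0:ℝ), G2 s := by
          refine lintegral_add_left ?_ _
          exact (Measurable.ennreal_ofReal (by fun_prop)).mul
            ((Measurable.ennreal_ofReal (by fun_prop)).mul
              (Measurable.ennreal_ofReal (by fun_prop)))
      _ = _ := by rw [hG1int, hG2int]


universe u


lemma iIndepFun_reindex {Ω : Type u} {ι ι' : Type*} [MeasurableSpace Ω] {P : Measure Ω}
    [Nonempty ι'] {β : Type*} [MeasurableSpace β] {f : ι → Ω → β} (j : ι' → ι)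
    (hj : Function.Injective j)
    (hf : iIndepFun f P) :
    iIndepFun (fun i => f (j i)) P := by
  classical
  rw [iIndepFun_iff_measure_inter_preimage_eq_mul] at hf ⊢
  intro S sets H
  set inv := Function.invFun j with hinvdef
  have hinv : ∀ i' : ι', inv (j i') = i' := fun i' => Function.leftInverse_invFun hj i'
  have hmeas : ∀ i, i ∈ S.image j → MeasurableSet (sets (inv i)) := by
    intro i hi
    rcases Finset.mem_image.1 hi with ⟨i', hi', rfl⟩
    rw [hinv]
    exact H i' hi'
  have h1 := hf (S.image j) (sets := fun i => sets (inv i)) hmeas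
  have hset : (⋂ i ∈ S.image j, f i ⁻¹' sets (inv i)) = ⋂ i' ∈ S, f (j i') ⁻¹' sets i' := by
    ext ω
    simp only [Set.mem_iInter, Finset.mem_image]
    constructor
    · intro hw i' hi'
      have := hw (j i') ⟨i', hi', rfl⟩
      rwa [hinv] at this
    · rintro hw i ⟨i', hi', rfl⟩
      rw [hinv]
      exact hw i' hi'
  have hprod : ∏ i ∈ S.image j, P (f i ⁻¹' sets (inv i)) = ∏ i' ∈ S, P (f (j i') ⁻¹' sets i') := by
    rw [Finset.prod_image (fun x _ y _ hxy => hj hxy)]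
    refine Finset.prod_congr rfl (fun i' _ => by rw [hinv])
  rw [hset, hprod] at h1
  exact h1


lemma expMeasure_Iio_zero (r : ℝ) : expMeasure r (Iio 0) = 0 := by
  rw [expMeasure, gammaMeasure, withDensity_apply _ measurableSet_Iio]
  exact lintegral_gammaPDF_of_nonpos le_rfl

lemma prob_eq {lam mu c t : ℝ} (hlam : 0 < lam) (hmu : 0 < mu) (ht : 0 < t) (hc : 0 < c)
    {Ω : Type u} [MeasurableSpace Ω] (P : Measure Ω) [IsProbabilityMeasure P] :
    ∀ (n : ℕ) (g h : ℕ → Ω → ℝ), (∀ i, Measurable (g i)) → (∀ i, Measurable (h i)) →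
      iIndepFun (Sum.elim g h) P →
      (∀ i, ∀ s : ℝ, 0 ≤ s → P {ω | g i ω ≤ s} = ENNReal.ofReal (1 - Real.exp (-(lam * s)))) →
      (∀ i, ∀ s : ℝ, 0 ≤ s → P {ω | h i ω ≤ s} = ENNReal.ofReal (1 - Real.exp (-(mu * s)))) →
      ∀ a : ℝ, 0 ≤ a →
      P {ω | ∀ i, i < n → h i ω ≤ c + t * (a + ∑ j ∈ Finset.range (i+1), g j ω)}
        = A lam mu c t n a := by
  intro n
  induction n with
  | zero =>
    intro g h _ _ _ _ _ a _
    have hu : {ω : Ω | ∀ i, i < 0 → h i ω ≤ c + t * (a + ∑ j ∈ Finset.range (i+1), g j ω)}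
        = univ := by
      ext ω; simp
    rw [hu, A_zero, measure_univ]
  | succ n ih =>
    intro g h hgm hhm hindep hgd hhd a ha
    classical
    haveI : IsProbabilityMeasure (expMeasure lam) := isProbabilityMeasure_expMeasure hlam
    haveI : IsProbabilityMeasure (expMeasure mu) := isProbabilityMeasure_expMeasure hmu
    set F : ℕ ⊕ ℕ → Ω → ℝ := Sum.elim g h with hF
    have hFm : ∀ i : ℕ ⊕ ℕ, Measurable (F i) := by
      rintro (i | i)
      · exact hgm i
      · exact hhm i
    set V : Ω → ℝ × ℝ := fun ω => (g 0 ω, h 0 ω) with hV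
    set Wm : Ω → (ℕ ⊕ ℕ → ℝ) := fun ω j =>
      Sum.elim (fun i => g (i+1)) (fun i => h (i+1)) j ω with hWm
    have hVmeas : Measurable V := (hgm 0).prodMk (hhm 0)
    have hWmeas : Measurable Wm := by
      refine measurable_pi_lambda _ (fun j => ?_)
      rcases j with i | i
      · exact hgm (i+1)
      · exact hhm (i+1)
    set B : Set ((ℝ × ℝ) × (ℕ ⊕ ℕ → ℝ)) :=
      {p | p.1.2 ≤ c + t * (a + p.1.1)} ∩
        ⋂ (i : ℕ), ⋂ (_ : i < n), {p | p.2 (Sum.inr i)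
          ≤ c + t * ((a + p.1.1) + ∑ j ∈ Finset.range (i+1), p.2 (Sum.inl j))} with hB
    have hBmeas : MeasurableSet B := by
      refine MeasurableSet.inter ?_
        (MeasurableSet.iInter fun i => MeasurableSet.iInter fun _ => ?_)
      · exact measurableSet_le (measurable_fst.snd)
          (((measurable_fst.fst.const_add a).const_mul t).const_add c)
      · have hsum : Measurable fun p : (ℝ × ℝ) × (ℕ ⊕ ℕ → ℝ) =>
            ∑ j ∈ Finset.range (i+1), p.2 (Sum.inl j) :=
          Finset.measurable_sum _ (fun j _ => (measurable_pi_apply _).comp measurable_snd)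
        have h1 : Measurable fun p : (ℝ × ℝ) × (ℕ ⊕ ℕ → ℝ) => p.2 (Sum.inr i) :=
          (measurable_pi_apply (Sum.inr i)).comp measurable_snd
        exact measurableSet_le h1
          ((((measurable_fst.fst.const_add a).add hsum).const_mul t).const_add c)
    have hsetEq : {ω : Ω | ∀ i, i < n+1 →
          h i ω ≤ c + t * (a + ∑ j ∈ Finset.range (i+1), g j ω)}
        = (fun ω => (V ω, Wm ω)) ⁻¹' B := by
      ext ω
      simp only [hB, hV, hWm, Set.mem_setOf_eq, Set.mem_preimage, Set.mem_inter_iff,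
        Set.mem_iInter, Sum.elim_inl, Sum.elim_inr]
      constructor
      · intro hw
        refine ⟨?_, fun i hi => ?_⟩
        · have := hw 0 (Nat.succ_pos n)
          simpa [Finset.sum_range_one] using this
        · have h2 := hw (i+1) (Nat.succ_lt_succ hi)
          have hsum : ∑ j ∈ Finset.range (i+1+1), g j ω
              = (∑ j ∈ Finset.range (i+1), g (j+1) ω) + g 0 ω := Finset.sum_range_succ' _ _
          rw [hsum] at h2
          calc h (i+1) ω ≤ c + t * (a + ((∑ j ∈ Finset.range (i+1), g (j+1) ω) + g 0 ω)) := h2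
            _ = c + t * ((a + g 0 ω) + ∑ j ∈ Finset.range (i+1), g (j+1) ω) := by ring
      · rintro ⟨h0, hrest⟩ i hi
        rcases i with _ | i
        · simpa [Finset.sum_range_one] using h0
        · have h2 := hrest i (Nat.lt_of_succ_lt_succ hi)
          have hsum : ∑ j ∈ Finset.range (i+1+1), g j ω
              = (∑ j ∈ Finset.range (i+1), g (j+1) ω) + g 0 ω := Finset.sum_range_succ' _ _
          rw [hsum]
          calc h (i+1) ω ≤ c + t * ((a + g 0 ω) + ∑ j ∈ Finset.range (i+1), g (j+1) ω) := h2
            _ = c + t * (a + ((∑ j ∈ Finset.range (i+1), g (j+1) ω) + g 0 ω)) := by ring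
    have hIndepVW : IndepFun V Wm P := by
      have hIndep : iIndep (fun i : ℕ ⊕ ℕ =>
          MeasurableSpace.comap (F i) inferInstance) P := hindep.iIndep
      have hsup := indep_iSup_of_disjoint (fun i => (hFm i).comap_le) hIndep
        (disjoint_compl_right :
          Disjoint ({Sum.inl 0, Sum.inr 0} : Set (ℕ ⊕ ℕ)) ({Sum.inl 0, Sum.inr 0} : Set (ℕ ⊕ ℕ))ᶜ)
      rw [IndepFun_iff_Indep]
      refine indep_of_indep_of_le_left (indep_of_indep_of_le_right hsup ?_) ?_
      · -- comap Wm ≤ ⨆ i ∈ Sᶜ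
        have hpi : (MeasurableSpace.pi : MeasurableSpace (ℕ ⊕ ℕ → ℝ))
            = ⨆ j : ℕ ⊕ ℕ, (inferInstance : MeasurableSpace ℝ).comap
              (fun w : ℕ ⊕ ℕ → ℝ => w j) := rfl
        rw [hpi, MeasurableSpace.comap_iSup]
        refine iSup_le fun j => ?_
        rw [MeasurableSpace.comap_comp]
        rcases j with i | i
        · exact le_iSup₂ (f := fun i (_ : i ∈ ({Sum.inl 0, Sum.inr 0} : Set (ℕ ⊕ ℕ))ᶜ) =>
            MeasurableSpace.comap (F i) inferInstance) (Sum.inl (i+1)) (by simp)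
        · exact le_iSup₂ (f := fun i (_ : i ∈ ({Sum.inl 0, Sum.inr 0} : Set (ℕ ⊕ ℕ))ᶜ) =>
            MeasurableSpace.comap (F i) inferInstance) (Sum.inr (i+1)) (by simp)
      · -- comap V ≤ ⨆ i ∈ S
        have hprodms : (Prod.instMeasurableSpace : MeasurableSpace (ℝ × ℝ))
            = MeasurableSpace.comap Prod.fst inferInstance
              ⊔ MeasurableSpace.comap Prod.snd inferInstance := rfl
        rw [hprodms, MeasurableSpace.comap_sup, MeasurableSpace.comap_comp,
          MeasurableSpace.comap_comp]
        refine sup_le ?_ ?_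
        · exact le_iSup₂ (f := fun i (_ : i ∈ ({Sum.inl 0, Sum.inr 0} : Set (ℕ ⊕ ℕ))) =>
            MeasurableSpace.comap (F i) inferInstance) (Sum.inl 0) (by simp)
        · exact le_iSup₂ (f := fun i (_ : i ∈ ({Sum.inl 0, Sum.inr 0} : Set (ℕ ⊕ ℕ))) =>
            MeasurableSpace.comap (F i) inferInstance) (Sum.inr 0) (by simp)
    have hmapPair : P.map (fun ω => (V ω, Wm ω)) = (P.map V).prod (P.map Wm) :=
      (indepFun_iff_map_prod_eq_prod_map_map hVmeas.aemeasurable hWmeas.aemeasurable).1 hIndepVW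
    have hgh0 : IndepFun (g 0) (h 0) P :=
      hindep.indepFun (show (Sum.inl 0 : ℕ ⊕ ℕ) ≠ Sum.inr 0 by simp)
    have hmapV : P.map V = (expMeasure lam).prod (expMeasure mu) := by
      have h1 := (indepFun_iff_map_prod_eq_prod_map_map
        (hgm 0).aemeasurable (hhm 0).aemeasurable).1 hgh0
      rw [hV, h1, map_eq_expMeasure P (hgm 0) hlam (hgd 0),
        map_eq_expMeasure P (hhm 0) hmu (hhd 0)]
    haveI : IsProbabilityMeasure (P.map Wm) := Measure.isProbabilityMeasure_map hWmeas.aemeasurable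
    rw [hsetEq, ← Measure.map_apply (hVmeas.prodMk hWmeas) hBmeas, hmapPair, hmapV,
      Measure.prod_apply hBmeas,
      lintegral_prod _ (measurable_measure_prodMk_left hBmeas).aemeasurable, A_succ]
    have hae : ∀ᵐ s ∂(expMeasure lam), 0 ≤ s := by
      rw [ae_iff]
      have hset : {s : ℝ | ¬ 0 ≤ s} = Iio 0 := by ext s; simp
      rw [hset]; exact expMeasure_Iio_zero lam
    refine lintegral_congr_ae ?_
    filter_upwards [hae] with s hs
    have hbpos : (0:ℝ) ≤ c + t * (a + s) := by positivity
    set Bw : Set (ℕ ⊕ ℕ → ℝ) := ⋂ (i : ℕ), ⋂ (_ : i < n),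
      {w : ℕ ⊕ ℕ → ℝ | w (Sum.inr i)
        ≤ c + t * ((a + s) + ∑ j ∈ Finset.range (i+1), w (Sum.inl j))} with hBw
    have hBwmeas : MeasurableSet Bw := by
      refine MeasurableSet.iInter fun i => MeasurableSet.iInter fun _ => ?_
      have hsum : Measurable fun w : ℕ ⊕ ℕ → ℝ =>
          ∑ j ∈ Finset.range (i+1), w (Sum.inl j) :=
        Finset.measurable_sum _ (fun j _ => measurable_pi_apply _)
      exact measurableSet_le (measurable_pi_apply _)
        ((((hsum.const_add (a+s)).const_mul t).const_add c).comp measurable_id)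
    have hslice : ∀ u : ℝ, (Prod.mk (s, u) ⁻¹' B)
        = if u ≤ c + t * (a + s) then Bw else (∅ : Set (ℕ ⊕ ℕ → ℝ)) := by
      intro u
      split_ifs with hu
      · ext w
        simp only [hB, hBw, Set.mem_preimage, Set.mem_inter_iff, Set.mem_setOf_eq,
          Set.mem_iInter]
        constructor
        · exact fun hw => hw.2
        · exact fun hw => ⟨hu, hw⟩
      · ext w
        simp only [hB, Set.mem_preimage, Set.mem_inter_iff, Set.mem_setOf_eq,
          Set.mem_empty_iff_false, iff_false, not_and]
        intro hcon
        exact absurd hcon hu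
    calc ∫⁻ u, (P.map Wm) (Prod.mk (s, u) ⁻¹' B) ∂(expMeasure mu)
        = ∫⁻ u, (Iic (c + t * (a + s))).indicator (fun _ => (P.map Wm) Bw) u
            ∂(expMeasure mu) := by
          refine lintegral_congr (fun u => ?_)
          rw [hslice u]
          by_cases hu : u ≤ c + t * (a + s)
          · rw [if_pos hu, Set.indicator_of_mem (show u ∈ Iic _ from hu)]
          · rw [if_neg hu, Set.indicator_of_notMem (show u ∉ Iic _ from hu), measure_empty]
      _ = (P.map Wm) Bw * expMeasure mu (Iic (c + t * (a + s))) := by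
          rw [lintegral_indicator measurableSet_Iic, setLIntegral_const]
      _ = ENNReal.ofReal (1 - Real.exp (-(mu * (c + t * (a + s)))))
            * A lam mu c t n (a + s) := by
          rw [expMeasure_Iic hmu, if_pos hbpos, Measure.map_apply hWmeas hBwmeas]
          have hpre : Wm ⁻¹' Bw = {ω | ∀ i, i < n →
              h (i+1) ω ≤ c + t * ((a + s) + ∑ j ∈ Finset.range (i+1), g (j+1) ω)} := by
            ext ω
            simp only [hBw, hWm, Set.mem_preimage, Set.mem_iInter, Set.mem_setOf_eq,
              Sum.elim_inl, Sum.elim_inr]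
          rw [hpre]
          have hshift : iIndepFun
              (Sum.elim (fun i => g (i+1)) (fun i => h (i+1))) P := by
            have hinj : Function.Injective
                (Sum.map (fun i : ℕ => i+1) (fun i : ℕ => i+1)) :=
              Function.Injective.sumMap (fun x y hxy => by omega) (fun x y hxy => by omega)
            have h2 := iIndepFun_reindex
              (Sum.map (fun i : ℕ => i+1) (fun i : ℕ => i+1)) hinj hindep
            have heq : (fun i' : ℕ ⊕ ℕ =>
                Sum.elim g h (Sum.map (fun i : ℕ => i+1) (fun i : ℕ => i+1) i'))
                = Sum.elim (fun i => g (i+1)) (fun i => h (i+1)) := by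
              funext i'; rcases i' with i | i <;> rfl
            rwa [heq] at h2
          rw [ih (fun i => g (i+1)) (fun i => h (i+1)) (fun i => hgm (i+1))
            (fun i => hhm (i+1)) hshift (fun i => hgd (i+1)) (fun i => hhd (i+1))
            (a + s) (by positivity)]
          exact mul_comm _ _


end RISaux

open RISaux

/-- reflective-RIS blockage tangent. For a homogeneous PPP on
(0,∞) with intensity λ (arrival-time representation) with i.i.d. Exp(μ) marks,
an observer at (x, h) with x < 0, h > 0 sees
P[sup_i (h_i − h)₊/(x_i − x) ≤ t] = exp(−(ρ/t)·e^{−μh}·e^{μtx}), ρ = λ/μ. -/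
theorem reflective_RIS_tangent_cdf
    {Ω : Type*} [MeasurableSpace Ω] (P : Measure Ω) [IsProbabilityMeasure P]
    (lam mu : ℝ) (hlam : 0 < lam) (hmu : 0 < mu)
    (x h0 : ℝ) (hx0 : x < 0) (hh0 : 0 < h0)
    (g h : ℕ → Ω → ℝ)
    (hgm : ∀ i, Measurable (g i)) (hhm : ∀ i, Measurable (h i))
    (hindep : iIndepFun (Sum.elim g h) P)
    (hgd : ∀ i, ∀ s : ℝ, 0 ≤ s →
      P {ω | g i ω ≤ s} = ENNReal.ofReal (1 - Real.exp (-(lam * s))))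
    (hhd : ∀ i, ∀ s : ℝ, 0 ≤ s →
      P {ω | h i ω ≤ s} = ENNReal.ofReal (1 - Real.exp (-(mu * s))))
    (xs : ℕ → Ω → ℝ)
    (hxs : ∀ i ω, xs i ω = ∑ j ∈ Finset.range (i + 1), g j ω)
    (rho : ℝ) (hrho : rho = lam / mu)
    (t : ℝ) (ht : 0 < t) :
    P {ω | ∀ i, max (h i ω - h0) 0 / (xs i ω - x) ≤ t}
      = ENNReal.ofReal
          (Real.exp (-(rho / t) * Real.exp (-(mu * h0)) * Real.exp (mu * t * x))) := by
  classical
  set c : ℝ := h0 - t * x with hcdef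
  have hc : 0 < c := by nlinarith
  -- the null set
  set N : Set Ω := ⋃ j : ℕ, {ω | g j ω ≤ 0} with hN
  have hNnull : P N = 0 := by
    refine measure_iUnion_null (fun j => ?_)
    have := hgd j 0 le_rfl
    simpa using this
  -- events
  set E : Set Ω := {ω | ∀ i, max (h i ω - h0) 0 / (xs i ω - x) ≤ t} with hE
  set E' : Set Ω := {ω | ∀ i, h i ω ≤ c + t * (0 + ∑ j ∈ Finset.range (i+1), g j ω)} with hE'
  have hEE' : E ∩ Nᶜ = E' ∩ Nᶜ := by
    ext ω
    simp only [hE, hE', Set.mem_inter_iff, Set.mem_setOf_eq, Set.mem_compl_iff, hN,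
      Set.mem_iUnion, not_exists, not_le]
    constructor
    · rintro ⟨hw, hg⟩
      refine ⟨fun i => ?_, hg⟩
      have hSpos : 0 < ∑ j ∈ Finset.range (i+1), g j ω :=
        Finset.sum_pos (fun j _ => hg j) (Finset.nonempty_range_iff.2 (Nat.succ_ne_zero i))
      have hd : 0 < xs i ω - x := by rw [hxs i ω]; linarith
      have h1 := (div_le_iff₀ hd).1 (hw i)
      have h2 : h i ω - h0 ≤ t * (xs i ω - x) := le_trans (le_max_left _ _) h1
      have h3 : t * (xs i ω - x) = c + t * (0 + ∑ j ∈ Finset.range (i+1), g j ω) - h0 := by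
        rw [hxs i ω, hcdef]; ring
      linarith
    · rintro ⟨hw, hg⟩
      refine ⟨fun i => ?_, hg⟩
      have hSpos : 0 < ∑ j ∈ Finset.range (i+1), g j ω :=
        Finset.sum_pos (fun j _ => hg j) (Finset.nonempty_range_iff.2 (Nat.succ_ne_zero i))
      have hd : 0 < xs i ω - x := by rw [hxs i ω]; linarith
      rw [div_le_iff₀ hd]
      refine max_le ?_ (by positivity)
      have h3 : t * (xs i ω - x) = c + t * (0 + ∑ j ∈ Finset.range (i+1), g j ω) - h0 := by
        rw [hxs i ω, hcdef]; ring
      have := hw i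
      linarith
  have hPEE' : P E = P E' := by
    have h1 : P E = P (E ∩ Nᶜ) := (measure_inter_conull (by rwa [compl_compl])).symm
    have h2 : P E' = P (E' ∩ Nᶜ) := (measure_inter_conull (by rwa [compl_compl])).symm
    rw [h1, h2, hEE']
  set Es : ℕ → Set Ω := fun n =>
    {ω | ∀ i, i < n → h i ω ≤ c + t * (0 + ∑ j ∈ Finset.range (i+1), g j ω)} with hEs
  have hEsm : ∀ n, MeasurableSet (Es n) := by
    intro n
    have hrw : Es n = ⋂ (i : ℕ), ⋂ (_ : i < n),
        {ω | h i ω ≤ c + t * (0 + ∑ j ∈ Finset.range (i+1), g j ω)} := by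
      ext ω; simp [hEs]
    rw [hrw]
    refine MeasurableSet.iInter fun i => MeasurableSet.iInter fun _ => ?_
    have hsum : Measurable fun ω => ∑ j ∈ Finset.range (i+1), g j ω :=
      Finset.measurable_sum _ (fun j _ => hgm j)
    exact measurableSet_le (hhm i) (((hsum.const_add 0).const_mul t).const_add c)
  have hanti : Antitone Es := by
    intro m n hmn ω hw i hi
    exact hw i (lt_of_lt_of_le hi hmn)
  have hInter : E' = ⋂ n, Es n := by
    ext ω
    simp only [hE', hEs, Set.mem_setOf_eq, Set.mem_iInter]
    constructor
    · exact fun hw n i _ => hw i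
    · exact fun hw i => hw (i+1) i (Nat.lt_succ_self i)
  have htend : Tendsto (fun n => P (Es n)) atTop (𝓝 (P E')) := by
    rw [hInter]
    exact tendsto_measure_iInter_atTop (fun n => (hEsm n).nullMeasurableSet) hanti
      ⟨0, measure_ne_top _ _⟩
  have hAn : ∀ n, P (Es n) = A lam mu c t n 0 := fun n =>
    prob_eq hlam hmu ht hc P n g h hgm hhm hindep hgd hhd 0 le_rfl
  have htend2 : Tendsto (fun n => A lam mu c t n 0) atTop (𝓝 (P E')) := htend.congr hAn
  set L : ℝ≥0∞ := ENNReal.ofReal (Real.exp (-(lam / (mu * t) * Real.exp (-(mu * c))))) with hL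
  have hca : c + t * 0 = c := by ring
  have hlow : ∀ n, L ≤ A lam mu c t n 0 := by
    intro n
    have h9 := A_ge hlam hmu ht hc n 0 le_rfl
    rwa [hca] at h9
  have hup : ∀ n, A lam mu c t n 0 ≤ L + ENNReal.ofReal (lam / (mu * t) * Real.exp (-(mu * c)))
      * (ENNReal.ofReal (lam / (lam + mu * t)))^n := by
    intro n
    have h9 := A_le hlam hmu ht hc n 0 le_rfl
    rwa [hca] at h9
  have hPE'ge : L ≤ P E' := ge_of_tendsto htend2 (Eventually.of_forall hlow)
  have hPE'le : P E' ≤ L := by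
    have hr1 : (ENNReal.ofReal (lam / (lam + mu * t))) < 1 := by
      rw [← ENNReal.ofReal_one]
      refine (ENNReal.ofReal_lt_ofReal_iff (by norm_num)).2 ?_
      rw [div_lt_one (by positivity)]
      nlinarith [mul_pos hmu ht]
    have hpow : Tendsto (fun n => (ENNReal.ofReal (lam / (lam + mu * t)))^n) atTop (𝓝 0) :=
      ENNReal.tendsto_pow_atTop_nhds_zero_of_lt_one hr1
    have hmul : Tendsto (fun n => ENNReal.ofReal (lam / (mu * t) * Real.exp (-(mu * c)))
        * (ENNReal.ofReal (lam / (lam + mu * t)))^n) atTop (𝓝 0) := by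
      have h9 := ENNReal.Tendsto.const_mul hpow
        (Or.inr (show ENNReal.ofReal (lam / (mu * t) * Real.exp (-(mu * c))) ≠ ⊤ from ENNReal.ofReal_ne_top))
      simpa using h9
    have hupper : Tendsto (fun n => L + ENNReal.ofReal (lam / (mu * t) * Real.exp (-(mu * c)))
        * (ENNReal.ofReal (lam / (lam + mu * t)))^n) atTop (𝓝 L) := by
      have h9 := Tendsto.const_add L hmul
      simpa using h9
    exact le_of_tendsto_of_tendsto' htend2 hupper hup
  have hPE' : P E' = L := le_antisymm hPE'le hPE'ge
  rw [hPEE', hPE', hL]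
  congr 1
  rw [hrho, hcdef]
  rw [show -(mu * (h0 - t * x)) = -(mu * h0) + mu * t * x by ring, Real.exp_add, div_div]
  ring
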